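/- Let b ∈ ℝ^n satisfy κ_λ(b) > τ. Then for every signed permutation matrix P ∈ Π^s(b), the projection of b onto the OWL1 norm ball satisfies Π_{Δ_τ}(b) = Pᵀ x_λ(Pb). -/

import Mathlib

open Matrix

/-- The vector of absolute values of the entries of `x`, arranged in nonincreasing order. -/
noncomputable def absDesc {n : ℕ} (x : Fin n → ℝ) : Fin n → ℝ :=
  fun i => |x ((Tuple.sort fun j => |x j|) i.rev)|

/-- The ordered weighted ℓ1 (OWL1) norm `κ_λ(x) = ∑ i, λ_i |x|ᵢ↓`. -/
noncomputable def kappa {n : ℕ} (lam x : Fin n → ℝ) : ℝ :=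
  ∑ i, lam i * absDesc x i

/-- The monotone nonnegative cone `C = {x : x₁ ≥ x₂ ≥ … ≥ xₙ ≥ 0}`. -/
def coneC (n : ℕ) : Set (Fin n → ℝ) :=
  {x | (∀ i j : Fin n, i ≤ j → x j ≤ x i) ∧ ∀ i, 0 ≤ x i}

/-- `P` is a signed permutation matrix. -/
def IsSignedPerm {n : ℕ} (P : Matrix (Fin n) (Fin n) ℝ) : Prop :=
  ∃ σ : Equiv.Perm (Fin n), ∃ ε : Fin n → ℝ,
    (∀ i, ε i = 1 ∨ ε i = -1) ∧ ∀ i j, P i j = if j = σ i then ε i else 0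

/-- `p` minimizes `½‖x − b‖²` over `S`. -/
def IsMinimizer {n : ℕ} (S : Set (Fin n → ℝ)) (b p : Fin n → ℝ) : Prop :=
  p ∈ S ∧ ∀ x ∈ S, (1/2) * ∑ i, (p i - b i)^2 ≤ (1/2) * ∑ i, (x i - b i)^2

namespace OwlAux

variable {n : ℕ}

noncomputable def sortPerm (x : Fin n → ℝ) : Equiv.Perm (Fin n) :=
  (Tuple.sort fun j => |x j|) * Fin.revPerm

lemma absDesc_apply (x : Fin n → ℝ) (i : Fin n) :
    absDesc x i = |x (sortPerm x i)| := by
  simp [absDesc, sortPerm, Equiv.Perm.mul_apply]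

lemma absDesc_nonneg (x : Fin n → ℝ) (i : Fin n) : 0 ≤ absDesc x i := abs_nonneg _

lemma absDesc_antitone (x : Fin n → ℝ) : Antitone (absDesc x) := by
  intro i j hij
  have h := Tuple.monotone_sort (fun j => |x j|)
  have : j.rev ≤ i.rev := Fin.rev_le_rev.mpr hij
  exact h this

lemma absDesc_abs (x : Fin n → ℝ) : absDesc (fun i => |x i|) = absDesc x := by
  funext i
  simp [absDesc, abs_abs]

lemma absDesc_comp_perm (x : Fin n → ℝ) (g : Equiv.Perm (Fin n)) :
    absDesc (fun i => x (g i)) = absDesc x := by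
  funext i
  have h := congrFun (Tuple.comp_perm_comp_sort_eq_comp_sort (f := fun j => |x j|) (σ := g)) i.rev
  simpa [absDesc, Function.comp_def] using congrArg id h

lemma absDesc_of_antitone {y : Fin n → ℝ} (hmono : Antitone y) (hpos : ∀ i, 0 ≤ y i) :
    absDesc y = y := by
  have habs : (fun j => |y j|) = y := funext fun j => abs_of_nonneg (hpos j)
  have hm : Monotone (y ∘ (Fin.revPerm : Equiv.Perm (Fin n))) := by
    intro a b hab
    exact hmono (by simpa using Fin.rev_le_rev.mpr hab)
  have hsort : Tuple.sort (y ∘ (Fin.revPerm : Equiv.Perm (Fin n))) = Equiv.refl _ :=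
    (Tuple.sort_eq_refl_iff_monotone).mpr hm
  have h := Tuple.comp_perm_comp_sort_eq_comp_sort (f := y) (σ := (Fin.revPerm : Equiv.Perm (Fin n)))
  rw [hsort] at h
  simp only [Equiv.coe_refl, Function.comp_id] at h
  funext i
  have h2 := congrFun h i.rev
  simp only [Function.comp] at h2
  rw [absDesc, habs]
  rw [abs_of_nonneg (hpos _)]
  rw [h2.symm]
  simp

lemma monovary_of_antitone (f g : Fin n → ℝ) (hf : Antitone f) (hg : Antitone g) :
    Monovary f g := by
  intro i j h
  rcases le_or_gt i j with hij | hij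
  · exact absurd (hg hij) (not_le.mpr h)
  · exact hf hij.le

lemma sum_lam_absDesc_comp_le (lam x : Fin n → ℝ)
    (hmono : ∀ i j : Fin n, i ≤ j → lam j ≤ lam i) (g : Equiv.Perm (Fin n)) :
    ∑ i, lam i * absDesc x (g i) ≤ kappa lam x := by
  have hm : Monovary lam (absDesc x) :=
    monovary_of_antitone _ _ (fun a b hab => hmono a b hab) (absDesc_antitone x)
  have := hm.sum_smul_comp_perm_le_sum_smul (σ := g)
  simpa [kappa, smul_eq_mul] using this

/-- Key rearrangement: for any permutation ρ, `∑ λᵢ |x (ρ i)| ≤ κ(x)`. -/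
lemma sum_lam_abs_perm_le (lam x : Fin n → ℝ)
    (hmono : ∀ i j : Fin n, i ≤ j → lam j ≤ lam i) (ρ : Equiv.Perm (Fin n)) :
    ∑ i, lam i * |x (ρ i)| ≤ kappa lam x := by
  have key : ∀ i, |x (ρ i)| = absDesc x (((sortPerm x)⁻¹ * ρ) i) := by
    intro i
    rw [absDesc_apply]
    simp [Equiv.Perm.mul_apply]
  calc ∑ i, lam i * |x (ρ i)| = ∑ i, lam i * absDesc x (((sortPerm x)⁻¹ * ρ) i) := by
        simp only [key]
    _ ≤ kappa lam x := sum_lam_absDesc_comp_le lam x hmono _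

lemma kappa_eq_sum_perm (lam x : Fin n → ℝ) :
    kappa lam x = ∑ i, lam i * |x (sortPerm x i)| := by
  simp [kappa, absDesc_apply]

lemma kappa_nonneg (lam x : Fin n → ℝ) (hnonneg : ∀ i, 0 ≤ lam i) : 0 ≤ kappa lam x :=
  Finset.sum_nonneg fun i _ => mul_nonneg (hnonneg i) (abs_nonneg _)

lemma kappa_add_le (lam x y : Fin n → ℝ)
    (hmono : ∀ i j : Fin n, i ≤ j → lam j ≤ lam i) (hnonneg : ∀ i, 0 ≤ lam i) :
    kappa lam (fun i => x i + y i) ≤ kappa lam x + kappa lam y := by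
  set z : Fin n → ℝ := fun i => x i + y i with hz
  rw [kappa_eq_sum_perm lam z]
  calc ∑ i, lam i * |z (sortPerm z i)|
      ≤ ∑ i, (lam i * |x (sortPerm z i)| + lam i * |y (sortPerm z i)|) := by
        apply Finset.sum_le_sum
        intro i _
        rw [← mul_add]
        exact mul_le_mul_of_nonneg_left (abs_add_le _ _) (hnonneg i)
    _ = ∑ i, lam i * |x (sortPerm z i)| + ∑ i, lam i * |y (sortPerm z i)| :=
        Finset.sum_add_distrib
    _ ≤ kappa lam x + kappa lam y :=
        add_le_add (sum_lam_abs_perm_le lam x hmono _) (sum_lam_abs_perm_le lam y hmono _)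

lemma kappa_smul_le (lam x : Fin n → ℝ) {t : ℝ} (ht : 0 ≤ t)
    (hmono : ∀ i j : Fin n, i ≤ j → lam j ≤ lam i) :
    kappa lam (fun i => t * x i) ≤ t * kappa lam x := by
  set z : Fin n → ℝ := fun i => t * x i with hz
  rw [kappa_eq_sum_perm lam z]
  calc ∑ i, lam i * |z (sortPerm z i)|
      = t * ∑ i, lam i * |x (sortPerm z i)| := by
        rw [Finset.mul_sum]
        apply Finset.sum_congr rfl
        intro i _
        simp only [hz]
        rw [abs_mul, abs_of_nonneg ht]
        ring
    _ ≤ t * kappa lam x :=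
        mul_le_mul_of_nonneg_left (sum_lam_abs_perm_le lam x hmono _) ht

lemma sum_sq_absDesc (x : Fin n → ℝ) : ∑ i, (absDesc x i)^2 = ∑ i, (x i)^2 := by
  have : ∀ i, (absDesc x i)^2 = (fun j => (x j)^2) (sortPerm x i) := by
    intro i; rw [absDesc_apply]; simp [sq_abs]
  simp only [this]
  exact Equiv.sum_comp (sortPerm x) (fun j => (x j)^2)

lemma sum_mul_le_sum_absDesc (u v : Fin n → ℝ) :
    ∑ i, u i * v i ≤ ∑ i, absDesc u i * absDesc v i := by
  have step1 : ∑ i, u i * v i ≤ ∑ i, |u i| * |v i| := by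
    apply Finset.sum_le_sum
    intro i _
    calc u i * v i ≤ |u i * v i| := le_abs_self _
      _ = |u i| * |v i| := abs_mul _ _
  have step2 : ∑ i, |u i| * |v i| = ∑ i, |u (sortPerm v i)| * |v (sortPerm v i)| :=
    (Equiv.sum_comp (sortPerm v) (fun j => |u j| * |v j|)).symm
  have key : ∀ i, |u (sortPerm v i)| = absDesc u (((sortPerm u)⁻¹ * sortPerm v) i) := by
    intro i; rw [absDesc_apply]; simp [Equiv.Perm.mul_apply]
  have step3 : ∑ i, |u (sortPerm v i)| * |v (sortPerm v i)|
      = ∑ i, absDesc v i * absDesc u (((sortPerm u)⁻¹ * sortPerm v) i) := by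
    apply Finset.sum_congr rfl
    intro i _
    rw [key i, absDesc_apply v i]
    ring
  have hm : Monovary (absDesc v) (absDesc u) :=
    monovary_of_antitone _ _ (absDesc_antitone v) (absDesc_antitone u)
  have step4 := hm.sum_smul_comp_perm_le_sum_smul (σ := (sortPerm u)⁻¹ * sortPerm v)
  simp only [smul_eq_mul] at step4
  calc ∑ i, u i * v i ≤ ∑ i, |u i| * |v i| := step1
    _ = ∑ i, |u (sortPerm v i)| * |v (sortPerm v i)| := step2
    _ = ∑ i, absDesc v i * absDesc u (((sortPerm u)⁻¹ * sortPerm v) i) := step3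
    _ ≤ ∑ i, absDesc v i * absDesc u i := step4
    _ = ∑ i, absDesc u i * absDesc v i := by
        apply Finset.sum_congr rfl; intro i _; ring

lemma expand_sq_sum (u v : Fin n → ℝ) :
    ∑ i, (u i - v i)^2 = ∑ i, (u i)^2 + ∑ i, (v i)^2 - 2 * ∑ i, u i * v i := by
  rw [Finset.mul_sum, ← Finset.sum_add_distrib, ← Finset.sum_sub_distrib]
  apply Finset.sum_congr rfl
  intro i _
  ring

end OwlAux

open OwlAux in
/-- if `κ_λ(b) > τ`, then `Π_{Δ_τ}(b) = Pᵀ x_λ(P b)` for every `P ∈ Πˢ(b)`. -/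
theorem stmt1 {n : ℕ} (hn : 0 < n) (lam : Fin n → ℝ)
    (hmono : ∀ i j : Fin n, i ≤ j → lam j ≤ lam i)
    (hnonneg : ∀ i, 0 ≤ lam i) (hlam : lam ≠ 0)
    (τ : ℝ) (hτ : 0 < τ)
    (b : Fin n → ℝ) (hb : τ < kappa lam b)
    (P : Matrix (Fin n) (Fin n) ℝ) (hP : IsSignedPerm P) (hPb : P.mulVec b = absDesc b)
    (p q : Fin n → ℝ)
    (hp : IsMinimizer {x | kappa lam x ≤ τ} b p)
    (hq : IsMinimizer {x | x ∈ coneC n ∧ ∑ i, lam i * x i = τ} (P.mulVec b) q) :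
    p = Matrix.mulVec Pᵀ q := by
  classical
  obtain ⟨σ, ε, hε, hPij⟩ := hP
  have hεabs : ∀ i, |ε i| = 1 := by
    intro i; rcases hε i with h | h <;> rw [h] <;> norm_num
  -- mulVec formulas
  have hPmul : ∀ (v : Fin n → ℝ) (i : Fin n), P.mulVec v i = ε i * v (σ i) := by
    intro v i
    simp only [Matrix.mulVec, dotProduct, hPij, ite_mul, zero_mul]
    rw [Finset.sum_ite_eq' Finset.univ (σ i) (fun j => ε i * v j)]
    simp
  set r : Fin n → ℝ := Pᵀ.mulVec q with hr
  have hTmul : ∀ j, r j = ε (σ⁻¹ j) * q (σ⁻¹ j) := by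
    intro j
    simp only [hr, Matrix.mulVec, dotProduct, Matrix.transpose_apply, hPij]
    rw [Finset.sum_eq_single (σ⁻¹ j)]
    · simp
    · intro i _ hi
      have : j ≠ σ i := by
        intro h
        exact hi (by simp [h])
      simp [this]
    · simp
  have hqC : q ∈ coneC n := hq.1.1
  have hqτ : ∑ i, lam i * q i = τ := hq.1.2
  have hq_anti : Antitone q := fun i j h => hqC.1 i j h
  -- absDesc r = q
  have habs_r : (fun j => |r j|) = fun j => q (σ⁻¹ j) := by
    funext j
    rw [hTmul j, abs_mul, hεabs, one_mul, abs_of_nonneg (hqC.2 _)]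
  have habsDesc_r : absDesc r = q := by
    rw [← absDesc_abs r, habs_r, absDesc_comp_perm q σ⁻¹,
      absDesc_of_antitone hq_anti hqC.2]
  have hkr : kappa lam r = τ := by
    rw [kappa, habsDesc_r]; exact hqτ
  -- norm equality
  have E1 : ∑ j, (r j - b j)^2 = ∑ i, (q i - P.mulVec b i)^2 := by
    rw [← Equiv.sum_comp σ (fun j => (r j - b j)^2)]
    apply Finset.sum_congr rfl
    intro i _
    rw [hTmul (σ i), hPmul b i]
    simp only [Equiv.Perm.inv_def, Equiv.symm_apply_apply]
    rcases hε i with h | h <;> rw [h] <;> ring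
  -- κ(p) = τ
  have hkp_le : kappa lam p ≤ τ := hp.1
  have hdiff : p ≠ b := by
    intro h; rw [h] at hkp_le; linarith
  have hpb_pos : 0 < ∑ i, (p i - b i)^2 := by
    obtain ⟨i, hi⟩ := Function.ne_iff.mp hdiff
    apply Finset.sum_pos' (fun j _ => sq_nonneg _) ⟨i, Finset.mem_univ i, ?_⟩
    exact pow_pos (abs_pos.mpr (sub_ne_zero.mpr hi)) 2 |>.trans_le (by rw [sq_abs])
  have hkp : kappa lam p = τ := by
    by_contra hne
    have hlt : kappa lam p < τ := lt_of_le_of_ne hkp_le hne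
    set d : Fin n → ℝ := fun i => b i - p i with hd
    set κd : ℝ := kappa lam d with hκd
    have hκd0 : 0 ≤ κd := kappa_nonneg lam d hnonneg
    set t : ℝ := min 1 ((τ - kappa lam p)/(κd + 1)) with htdef
    have ht0 : 0 < t := by
      apply lt_min one_pos
      apply div_pos (by linarith) (by linarith)
    have ht1 : t ≤ 1 := min_le_left _ _
    set x' : Fin n → ℝ := fun i => p i + t * d i with hx'
    have hfeas : kappa lam x' ≤ τ := by
      have h1 : kappa lam x' ≤ kappa lam p + kappa lam (fun i => t * d i) :=
        kappa_add_le lam p (fun i => t * d i) hmono hnonneg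
      have h2 : kappa lam (fun i => t * d i) ≤ t * κd :=
        kappa_smul_le lam d ht0.le hmono
      have h3 : t * κd ≤ ((τ - kappa lam p)/(κd + 1)) * κd :=
        mul_le_mul_of_nonneg_right (min_le_right _ _) hκd0
      have h4 : ((τ - kappa lam p)/(κd + 1)) * κd < τ - kappa lam p := by
        rw [div_mul_eq_mul_div, div_lt_iff₀ (by linarith)]
        nlinarith
      linarith
    have hobj : ∑ i, (x' i - b i)^2 = (1 - t)^2 * ∑ i, (p i - b i)^2 := by
      rw [Finset.mul_sum]
      apply Finset.sum_congr rfl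
      intro i _
      simp only [hx', hd]
      ring
    have hlt2 : (1 - t)^2 < 1 := by nlinarith
    have := hp.2 x' hfeas
    rw [hobj] at this
    nlinarith
  -- absDesc p is feasible for the second problem
  have hxstar : absDesc p ∈ coneC n ∧ ∑ i, lam i * absDesc p i = τ :=
    ⟨⟨fun i j h => absDesc_antitone p h, absDesc_nonneg p⟩, hkp⟩
  have hcs : ∑ i, (absDesc p i - P.mulVec b i)^2 ≤ ∑ i, (p i - b i)^2 := by
    rw [hPb, expand_sq_sum, expand_sq_sum, sum_sq_absDesc p, sum_sq_absDesc b]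
    have := sum_mul_le_sum_absDesc p b
    linarith
  have h2 := hq.2 (absDesc p) hxstar
  have h1 := hp.2 r (by simpa using hkr.le)
  have heq : ∑ j, (r j - b j)^2 = ∑ i, (p i - b i)^2 := by
    have := E1
    linarith [hq.2 (absDesc p) hxstar, hp.2 r (by simpa using hkr.le)]
  -- midpoint argument
  set m : Fin n → ℝ := fun i => (1/2) * p i + (1/2) * r i with hm
  have hkm : kappa lam m ≤ τ := by
    have h1 : kappa lam m ≤ kappa lam (fun i => (1/2) * p i) + kappa lam (fun i => (1/2) * r i) :=
      kappa_add_le lam _ _ hmono hnonneg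
    have h2 : kappa lam (fun i => (1/2) * p i) ≤ (1/2) * kappa lam p :=
      kappa_smul_le lam p (by norm_num) hmono
    have h3 : kappa lam (fun i => (1/2) * r i) ≤ (1/2) * kappa lam r :=
      kappa_smul_le lam r (by norm_num) hmono
    rw [hkp] at h2; rw [hkr] at h3
    linarith
  have hmexp : ∑ i, (m i - b i)^2
      = (1/2) * ∑ i, (p i - b i)^2 + (1/2) * ∑ j, (r j - b j)^2 - (1/4) * ∑ i, (p i - r i)^2 := by
    rw [Finset.mul_sum, Finset.mul_sum, Finset.mul_sum, ← Finset.sum_add_distrib,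
      ← Finset.sum_sub_distrib]
    apply Finset.sum_congr rfl
    intro i _
    simp only [hm]
    ring
  have h3 := hp.2 m hkm
  have hsumzero : ∑ i, (p i - r i)^2 ≤ 0 := by
    rw [hmexp, heq] at h3
    linarith
  have hzero : ∀ i ∈ Finset.univ, (p i - r i)^2 = 0 := by
    intro i hi
    have hle := Finset.sum_nonneg (fun j (_ : j ∈ Finset.univ) => sq_nonneg (p j - r j))
    have hs0 : ∑ i, (p i - r i)^2 = 0 := le_antisymm hsumzero hle
    exact (Finset.sum_eq_zero_iff_of_nonneg (fun j _ => sq_nonneg _)).mp hs0 i hi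
  funext i
  have := hzero i (Finset.mem_univ i)
  have := pow_eq_zero_iff (n := 2) (by norm_num) |>.mp this
  exact sub_eq_zero.mp this
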